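/- In the real Banach space ℓ¹, let C = {(x_n) ∈ ℓ¹ : Σ_{n=1}^∞ x_n = 1 and x_n ≥ 0 for all n} and D = {(y_n) ∈ ℓ¹ : Σ_{n=1}^∞ n·y_n/(n+1) = 1 and y_n ≥ 0 for all n}. Then C and D are disjoint nonempty bounded closed convex subsets of ℓ¹ and inf{‖ξ − ζ‖₁ : ξ ∈ C, ζ ∈ D} = 0; in particular, C and D are not strongly separated. -/

import Mathlib

open Filter Topology

/-- `C` and `D` are strongly separated. -/
def StronglySeparated {X : Type*} [NormedAddCommGroup X] [NormedSpace ℝ X]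
    (C D : Set X) : Prop :=
  ∃ f : X →L[ℝ] ℝ, f ≠ 0 ∧ ∃ a b : ℝ, a < b ∧ (∀ c ∈ C, f c ≤ a) ∧ ∀ d ∈ D, b ≤ f d

/-- In `ℓ¹`, the sets
`C = {(x_n) : Σ x_n = 1, x_n ≥ 0}` and `D = {(y_n) : Σ n·y_n/(n+1) = 1, y_n ≥ 0}`
(indices starting at `1` in the paper; here sequences are indexed by `ℕ` starting at `0`, so
the weights in `D` are `(k+1)/(k+2)`) are disjoint nonempty bounded closed convex sets with
`inf{‖ξ - ζ‖₁ : ξ ∈ C, ζ ∈ D} = 0`; in particular they are not strongly separated. -/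
noncomputable abbrev E1 := lp (fun _ : ℕ => ℝ) 1

lemma summable_abs_coe (ξ : E1) : Summable (fun k => ‖ξ k‖) := by
  have := (lp.memℓp ξ).summable (by norm_num)
  simpa using this

lemma summable_coe (ξ : E1) : Summable (fun k => ξ k) :=
  (summable_abs_coe ξ).of_norm

lemma norm_eq' (ξ : E1) : ‖ξ‖ = ∑' k, ‖ξ k‖ := by
  have := lp.norm_eq_tsum_rpow (p := 1) (by norm_num) ξ
  simpa using this

lemma summable_wcoe (w : ℕ → ℝ) (hw : ∀ k, |w k| ≤ 1) (ξ : E1) :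
    Summable (fun k => w k * ξ k) := by
  refine Summable.of_norm_bounded (summable_abs_coe ξ) (fun k => ?_)
  rw [norm_mul]
  calc ‖w k‖ * ‖ξ k‖ ≤ 1 * ‖ξ k‖ := by
        exact mul_le_mul_of_nonneg_right (hw k) (norm_nonneg _)
    _ = ‖ξ k‖ := one_mul _

lemma lipschitz_weighted (w : ℕ → ℝ) (hw : ∀ k, |w k| ≤ 1) :
    LipschitzWith 1 (fun ξ : E1 => ∑' k, w k * ξ k) := by
  rw [lipschitzWith_iff_dist_le_mul]
  intro ξ ζ
  rw [dist_eq_norm, dist_eq_norm]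
  have hsub : ∀ k, (ξ - ζ) k = ξ k - ζ k := fun k => by
    have := congrFun (lp.coeFn_sub ξ ζ) k; simpa using this
  have h1 : (∑' k, w k * ξ k) - (∑' k, w k * ζ k) = ∑' k, w k * (ξ - ζ) k := by
    rw [← Summable.tsum_sub (summable_wcoe w hw ξ) (summable_wcoe w hw ζ)]
    congr 1; funext k; rw [hsub k]; ring
  rw [h1]
  calc ‖∑' k, w k * (ξ - ζ) k‖ ≤ ∑' k, ‖w k * (ξ - ζ) k‖ :=
        norm_tsum_le_tsum_norm (summable_wcoe w hw (ξ - ζ)).norm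
    _ ≤ ∑' k, ‖(ξ - ζ) k‖ := by
        refine Summable.tsum_le_tsum (fun k => ?_) (summable_wcoe w hw (ξ - ζ)).norm
          (summable_abs_coe (ξ - ζ))
        rw [norm_mul]
        calc ‖w k‖ * ‖(ξ - ζ) k‖ ≤ 1 * ‖(ξ - ζ) k‖ :=
              mul_le_mul_of_nonneg_right (hw k) (norm_nonneg _)
          _ = ‖(ξ - ζ) k‖ := one_mul _
    _ = ‖ξ - ζ‖ := (norm_eq' (ξ - ζ)).symm
    _ = 1 * ‖ξ - ζ‖ := (one_mul _).symm

lemma isClosed_weighted (w : ℕ → ℝ) (hw : ∀ k, |w k| ≤ 1) :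
    IsClosed {ξ : E1 | (∑' k, w k * ξ k) = 1 ∧ ∀ k, 0 ≤ ξ k} := by
  have h1 : IsClosed {ξ : E1 | (∑' k, w k * ξ k) = 1} :=
    isClosed_singleton.preimage (lipschitz_weighted w hw).continuous
  have h2 : IsClosed {ξ : E1 | ∀ k, 0 ≤ ξ k} := by
    have : {ξ : E1 | ∀ k, 0 ≤ ξ k} = ⋂ k, (fun ξ : E1 => ξ k) ⁻¹' Set.Ici 0 := by
      ext ξ; simp [Set.mem_iInter]
    rw [this]
    refine isClosed_iInter (fun k => IsClosed.preimage ?_ isClosed_Ici)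
    exact ((continuous_apply k).comp (lp.uniformContinuous_coe (p := 1)).continuous)
  exact h1.inter h2

lemma convex_weighted (w : ℕ → ℝ) (hw : ∀ k, |w k| ≤ 1) :
    Convex ℝ {ξ : E1 | (∑' k, w k * ξ k) = 1 ∧ ∀ k, 0 ≤ ξ k} := by
  rintro ξ ⟨hξ1, hξ2⟩ ζ ⟨hζ1, hζ2⟩ a b ha hb hab
  have hco : ∀ k, (a • ξ + b • ζ) k = a * ξ k + b * ζ k := by
    intro k
    have h1 := congrFun (lp.coeFn_add (a • ξ) (b • ζ)) k
    have h2 := congrFun (lp.coeFn_smul a ξ) k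
    have h3 := congrFun (lp.coeFn_smul b ζ) k
    simp only [Pi.add_apply, Pi.smul_apply, smul_eq_mul] at h1 h2 h3
    rw [h1, h2, h3]
  constructor
  · have : (∑' k, w k * (a • ξ + b • ζ) k)
        = a * (∑' k, w k * ξ k) + b * (∑' k, w k * ζ k) := by
      rw [← tsum_mul_left, ← tsum_mul_left,
        ← Summable.tsum_add ((summable_wcoe w hw ξ).mul_left a) ((summable_wcoe w hw ζ).mul_left b)]
      congr 1; funext k; rw [hco k]; ring
    rw [this, hξ1, hζ1]; linarith
  · intro k
    rw [hco k]
    have := mul_nonneg ha (hξ2 k)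
    have := mul_nonneg hb (hζ2 k)
    linarith

lemma apply_single (k : ℕ) (c : ℝ) (j : ℕ) :
    (lp.single 1 k c : E1) j = if j = k then c else 0 := by
  rcases eq_or_ne j k with h | h
  · subst h; simp [lp.single_apply_self]
  · simp [lp.single_apply_ne _ _ _ h, h]

lemma tsum_w_single (w : ℕ → ℝ) (k : ℕ) (c : ℝ) :
    (∑' j, w j * (lp.single 1 k c : E1) j) = w k * c := by
  rw [tsum_eq_single k]
  · rw [apply_single]; simp
  · intro j hj; rw [apply_single]; simp [hj]

lemma norm_single (k : ℕ) (c : ℝ) : ‖(lp.single 1 k c : E1)‖ = |c| := by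
  rw [norm_eq']
  rw [tsum_eq_single k]
  · rw [apply_single]; simp
  · intro j hj; rw [apply_single]; simp [hj]

lemma norm_single_sub (k : ℕ) (a b : ℝ) :
    ‖(lp.single 1 k a : E1) - lp.single 1 k b‖ = |a - b| := by
  have hsub : ∀ j, ((lp.single 1 k a : E1) - (lp.single 1 k b : E1)) j
      = (if j = k then a - b else 0) := by
    intro j
    have := congrFun (lp.coeFn_sub (lp.single 1 k a : E1) (lp.single 1 k b)) j
    simp only [Pi.sub_apply] at this
    rw [this, apply_single, apply_single]
    split <;> simp
  rw [norm_eq', tsum_eq_single k]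
  · rw [hsub k]; simp
  · intro j hj; rw [hsub j]; simp [hj]

theorem statement19
    (C D : Set (lp (fun _ : ℕ => ℝ) 1))
    (hC : C = {ξ : lp (fun _ : ℕ => ℝ) 1 |
      (∑' k : ℕ, ξ k) = 1 ∧ ∀ k, 0 ≤ ξ k})
    (hD : D = {ζ : lp (fun _ : ℕ => ℝ) 1 |
      (∑' k : ℕ, ((k : ℝ) + 1) / ((k : ℝ) + 2) * ζ k) = 1 ∧ ∀ k, 0 ≤ ζ k}) :
    Disjoint C D ∧ C.Nonempty ∧ D.Nonempty ∧
      Bornology.IsBounded C ∧ Bornology.IsBounded D ∧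
      IsClosed C ∧ IsClosed D ∧ Convex ℝ C ∧ Convex ℝ D ∧
      (∀ ε > (0 : ℝ), ∃ ξ ∈ C, ∃ ζ ∈ D, ‖ξ - ζ‖ < ε) ∧
      ¬ StronglySeparated C D := by
  set w : ℕ → ℝ := fun k => ((k : ℝ) + 1) / ((k : ℝ) + 2) with hwdef
  have hk1 : ∀ k : ℕ, (0:ℝ) < (k:ℝ) + 1 := fun k => by positivity
  have hk2 : ∀ k : ℕ, (0:ℝ) < (k:ℝ) + 2 := fun k => by positivity
  have hwpos : ∀ k, 0 < w k := fun k => div_pos (hk1 k) (hk2 k)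
  have hwlt : ∀ k, w k < 1 := fun k => by
    rw [hwdef]; rw [div_lt_one (hk2 k)]; linarith
  have hwabs : ∀ k, |w k| ≤ 1 := fun k => by
    rw [abs_of_pos (hwpos k)]; exact (hwlt k).le
  have hwhalf : ∀ k, (1:ℝ)/2 ≤ w k := fun k => by
    rw [hwdef]; rw [div_le_div_iff₀ (by norm_num) (hk2 k)]
    have : (0:ℝ) ≤ (k:ℝ) := Nat.cast_nonneg k
    linarith
  have h1abs : ∀ k : ℕ, |(fun _ : ℕ => (1:ℝ)) k| ≤ 1 := fun k => by simp
  have hCw : C = {ξ : E1 | (∑' k, (fun _ : ℕ => (1:ℝ)) k * ξ k) = 1 ∧ ∀ k, 0 ≤ ξ k} := by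
    rw [hC]; simp only [one_mul]
  -- membership of scaled basis vectors
  have hmemC : ∀ k : ℕ, (lp.single 1 k (1:ℝ) : E1) ∈ C := by
    intro k
    rw [hC]
    refine ⟨?_, ?_⟩
    · have := tsum_w_single (fun _ => (1:ℝ)) k 1
      simpa using this
    · intro j; rw [apply_single]; split <;> norm_num
  have hmemD : ∀ k : ℕ, (lp.single 1 k (((k:ℝ)+2)/((k:ℝ)+1)) : E1) ∈ D := by
    intro k
    rw [hD]
    refine ⟨?_, ?_⟩
    · rw [tsum_w_single]
      field_simp
    · intro j; rw [apply_single]; split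
      · positivity
      · exact le_refl 0
  -- disjointness
  have hdisj : Disjoint C D := by
    rw [Set.disjoint_left]
    intro ξ hξC hξD
    rw [hC] at hξC; rw [hD] at hξD
    obtain ⟨hs1, hpos⟩ := hξC
    obtain ⟨hs2, -⟩ := hξD
    have hne : ∃ k, 0 < ξ k := by
      by_contra h
      push_neg at h
      have hz : ∀ k, ξ k = (0:ℝ) := fun k => le_antisymm (h k) (hpos k)
      rw [tsum_congr hz] at hs1
      simp at hs1
    obtain ⟨k0, hk0⟩ := hne
    have hlt : (∑' k, w k * ξ k) < ∑' k, ξ k := by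
      refine Summable.tsum_lt_tsum (i := k0) (fun k => ?_) ?_ (summable_wcoe w hwabs ξ) (summable_coe ξ)
      · nlinarith [hwlt k, hpos k]
      · nlinarith [hwlt k0]
    rw [hs1, hs2] at hlt
    exact lt_irrefl 1 hlt
  -- the approximation property
  have happrox : ∀ ε > (0 : ℝ), ∃ ξ ∈ C, ∃ ζ ∈ D, ‖ξ - ζ‖ < ε := by
    intro ε hε
    obtain ⟨k, hk⟩ := exists_nat_one_div_lt hε
    refine ⟨lp.single 1 k (1:ℝ), hmemC k, lp.single 1 k (((k:ℝ)+2)/((k:ℝ)+1)), hmemD k, ?_⟩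
    rw [norm_single_sub]
    have hval : (1:ℝ) - ((k:ℝ)+2)/((k:ℝ)+1) = -(1/((k:ℝ)+1)) := by
      field_simp
      ring
    rw [hval, abs_neg, abs_of_pos (by positivity)]
    exact hk
  refine ⟨hdisj, ⟨_, hmemC 0⟩, ⟨_, hmemD 0⟩, ?_, ?_, ?_, ?_, ?_, ?_, happrox, ?_⟩
  · -- C bounded
    refine (Metric.isBounded_closedBall (x := (0:E1)) (r := 1)).subset ?_
    intro ξ hξ
    rw [hC] at hξ
    obtain ⟨hs, hpos⟩ := hξ
    rw [Metric.mem_closedBall, dist_zero_right, norm_eq']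
    calc (∑' k, ‖ξ k‖) = ∑' k, ξ k :=
          tsum_congr fun k => Real.norm_of_nonneg (hpos k)
      _ ≤ 1 := le_of_eq hs
  · -- D bounded
    refine (Metric.isBounded_closedBall (x := (0:E1)) (r := 2)).subset ?_
    intro ξ hξ
    rw [hD] at hξ
    obtain ⟨hs, hpos⟩ := hξ
    rw [Metric.mem_closedBall, dist_zero_right, norm_eq']
    have h1 : (∑' k, ‖ξ k‖) = ∑' k, ξ k :=
      tsum_congr fun k => Real.norm_of_nonneg (hpos k)
    have h2 : (∑' k, ξ k) ≤ ∑' k, 2 * (w k * ξ k) := by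
      refine Summable.tsum_le_tsum (fun k => ?_) (summable_coe ξ)
        ((summable_wcoe w hwabs ξ).mul_left 2)
      nlinarith [hwhalf k, hpos k]
    have h3 : (∑' k, 2 * (w k * ξ k)) = 2 := by
      rw [tsum_mul_left, hs]; norm_num
    rw [h1]; rw [h3] at h2; exact h2
  · rw [hCw]; exact isClosed_weighted _ h1abs
  · rw [hD]; exact isClosed_weighted w hwabs
  · rw [hCw]; exact convex_weighted _ h1abs
  · rw [hD]; exact convex_weighted w hwabs
  · -- not strongly separated
    rintro ⟨f, hf0, a, b, hab, hCa, hDb⟩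
    have hfn : 0 < ‖f‖ := by
      rw [norm_pos_iff]; exact hf0
    obtain ⟨ξ, hξ, ζ, hζ, hlt⟩ := happrox ((b - a) / ‖f‖) (div_pos (by linarith) hfn)
    have h1 : f ξ ≤ a := hCa ξ hξ
    have h2 : b ≤ f ζ := hDb ζ hζ
    have h3 : f ζ - f ξ ≤ ‖f‖ * ‖ζ - ξ‖ := by
      calc f ζ - f ξ = f (ζ - ξ) := by rw [map_sub]
        _ ≤ |f (ζ - ξ)| := le_abs_self _
        _ ≤ ‖f‖ * ‖ζ - ξ‖ := f.le_opNorm _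
    rw [norm_sub_rev] at h3
    have h4 : ‖f‖ * ‖ξ - ζ‖ < ‖f‖ * ((b - a) / ‖f‖) :=
      mul_lt_mul_of_pos_left hlt hfn
    rw [mul_div_cancel₀ _ hfn.ne'] at h4
    linarith
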